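/- arXiv:2406.08538 — 2 statements merged into one kernel-verified Lean document; each statement's English description precedes it below -/
import Mathlib

section
/- If every 3-point vertex in a tree satisfies the condition that the largest of its three incident edge-labels is at most the sum of the other two, and every 4-point vertex satisfies that the largest of its four incident edge-labels is at most the sum of the other three plus one, then for any tree subgraph with boundary edge-labels m_1, ..., m_n (all natural numbers), the label m_n is at most m_1 + m_2 + ... + m_{n-1} + (number of 4-point vertices in the subgraph). -/
open scoped Classical

namespace Stmt0Aux

set_option maxHeartbeats 1000000
set_option linter.unusedSectionVars false


variable {V : Type*} [Fintype V] [DecidableEq V]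

noncomputable def bnd (G : SimpleGraph V) [DecidableRel G.Adj] (S : Finset V) :
    Finset (Sym2 V) :=
  G.edgeFinset.filter (fun e => ∃ a b, e = s(a, b) ∧ a ∈ S ∧ b ∉ S)

lemma mem_bnd {G : SimpleGraph V} [DecidableRel G.Adj] {S : Finset V} {e : Sym2 V} :
    e ∈ bnd G S ↔ ∃ a b, G.Adj a b ∧ a ∈ S ∧ b ∉ S ∧ e = s(a, b) := by
  unfold bnd
  simp only [Finset.mem_filter, SimpleGraph.mem_edgeFinset]
  constructor
  · rintro ⟨hE, a, b, rfl, ha, hb⟩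
    exact ⟨a, b, (SimpleGraph.mem_edgeSet G).mp hE, ha, hb, rfl⟩
  · rintro ⟨a, b, hadj, ha, hb, rfl⟩
    exact ⟨(SimpleGraph.mem_edgeSet G).mpr hadj, a, b, rfl, ha, hb⟩

lemma mem_inc {G : SimpleGraph V} [DecidableRel G.Adj] {v : V} {e : Sym2 V} :
    e ∈ G.incidenceFinset v ↔ ∃ c, G.Adj v c ∧ e = s(v, c) := by
  rw [SimpleGraph.mem_incidenceFinset]
  constructor
  · rintro ⟨hE, hv⟩
    refine ⟨Sym2.Mem.other hv, ?_, (Sym2.other_spec hv).symm⟩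
    exact (SimpleGraph.mem_edgeSet G).mp (by rw [Sym2.other_spec hv]; exact hE)
  · rintro ⟨c, hadj, rfl⟩
    exact ⟨(SimpleGraph.mem_edgeSet G).mpr hadj, Sym2.mem_mk_left _ _⟩

lemma induce_connected_iff_walks {G : SimpleGraph V} {s : Set V} :
    (G.induce s).Connected ↔ s.Nonempty ∧
      ∀ u ∈ s, ∀ v ∈ s, ∃ p : G.Walk u v, ∀ x ∈ p.support, x ∈ s := by
  rw [SimpleGraph.connected_induce_iff,
    SimpleGraph.Subgraph.connected_iff_forall_exists_walk_subgraph]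
  constructor
  · rintro ⟨hne, h⟩
    refine ⟨hne, fun u hu v hv => ?_⟩
    obtain ⟨p, hp⟩ := h hu hv
    exact ⟨p, fun x hx => hp.1 ((SimpleGraph.Walk.mem_verts_toSubgraph p).mpr hx)⟩
  · rintro ⟨hne, h⟩
    refine ⟨hne, fun {u v} hu hv => ?_⟩
    obtain ⟨p, hp⟩ := h u hu v hv
    exact ⟨p, p.toSubgraph_le_induce_support.trans
      (SimpleGraph.Subgraph.induce_mono_right (fun x hx => hp x hx))⟩


variable {V : Type*} [Fintype V] [DecidableEq V]


lemma not_mem_support {G : SimpleGraph V} {S : Finset V} {v w u1 u2 : V}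
    (huniq : ∀ x ∈ S, G.Adj v x → x = w)
    {p : G.Walk u1 u2} (hp : p.IsPath) (hsupp : ∀ x ∈ p.support, x ∈ S)
    (h1 : u1 ≠ v) (h2 : u2 ≠ v) : v ∉ p.support := by
  intro hvp
  obtain ⟨y, hvy, q2', hq2'⟩ :=
    SimpleGraph.Walk.exists_eq_cons_of_ne (fun h => h2 h.symm) (p.dropUntil v hvp)
  obtain ⟨x, hvx, r1, hr1⟩ :=
    SimpleGraph.Walk.exists_eq_cons_of_ne (fun h => h1 h.symm) (p.takeUntil v hvp).reverse
  have hxmem : x ∈ (p.takeUntil v hvp).support := by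
    have hx : x ∈ (p.takeUntil v hvp).reverse.support := by
      rw [hr1, SimpleGraph.Walk.support_cons]
      exact List.mem_cons_of_mem _ r1.start_mem_support
    rwa [SimpleGraph.Walk.support_reverse, List.mem_reverse] at hx
  have hymem : y ∈ (p.dropUntil v hvp).support.tail := by
    rw [hq2', SimpleGraph.Walk.support_cons, List.tail_cons]
    exact q2'.start_mem_support
  have hxS : x ∈ S := hsupp x (p.support_takeUntil_subset hvp hxmem)
  have hyS : y ∈ S := hsupp y (p.support_dropUntil_subset hvp (List.mem_of_mem_tail hymem))
  have hxw : x = w := huniq x hxS hvx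
  have hyw : y = w := huniq y hyS hvy
  have hnd : ((p.takeUntil v hvp).append (p.dropUntil v hvp)).support.Nodup := by
    rw [p.take_spec hvp]; exact hp.support_nodup
  rw [SimpleGraph.Walk.support_append] at hnd
  exact (List.nodup_append'.mp hnd).2.2 (hxw ▸ hxmem) (hyw ▸ hymem)

lemma exists_leaf (G : SimpleGraph V) [DecidableRel G.Adj] (hA : G.IsAcyclic)
    (S : Finset V) (hcard : 2 ≤ S.card)
    (hconn : (G.induce (↑S : Set V)).Connected) :
    ∃ v ∈ S, ∃ w ∈ S, G.Adj v w ∧ ∀ x ∈ S, G.Adj v x → x = w := by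
  set T : SimpleGraph (↑S : Set V) := G.induce (↑S : Set V) with hTdef
  haveI : DecidableRel T.Adj := Classical.decRel _
  have hTacy : T.IsAcyclic := by
    intro u c hc
    exact hA (c.map (SimpleGraph.Embedding.induce (G := G) (↑S : Set V)).toHom)
      ((SimpleGraph.Walk.map_isCycle_iff_of_injective
        (SimpleGraph.Embedding.induce (G := G) (↑S : Set V)).injective).mpr hc)
  have hTtree : T.IsTree := ⟨hconn, hTacy⟩
  have hcardV : Fintype.card (↑S : Set V) = S.card := by simpa using Fintype.card_coe S
  have hedge : T.edgeFinset.card + 1 = Fintype.card (↑S : Set V) := hTtree.card_edgeFinset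
  have hsumdeg : ∑ v0, T.degree v0 = 2 * T.edgeFinset.card :=
    SimpleGraph.sum_degrees_eq_twice_card_edges T
  have hlow : ∃ v0 : (↑S : Set V), T.degree v0 ≤ 1 := by
    by_contra hno
    push_neg at hno
    have hsum : 2 * Fintype.card (↑S : Set V) ≤ ∑ v0, T.degree v0 := by
      calc 2 * Fintype.card (↑S : Set V) = ∑ _v0 : (↑S : Set V), 2 := by
            rw [Finset.sum_const, Finset.card_univ]; ring
        _ ≤ _ := Finset.sum_le_sum (fun i _ => hno i)
    omega
  obtain ⟨v0, hv0⟩ := hlow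
  obtain ⟨u0, hu0⟩ := Fintype.exists_ne_of_one_lt_card (by omega) v0
  obtain ⟨p⟩ := hTtree.isConnected.preconnected v0 u0
  obtain ⟨z0, hadj0, -, -⟩ := SimpleGraph.Walk.exists_eq_cons_of_ne (Ne.symm hu0) p
  have hdegpos : 0 < T.degree v0 := (SimpleGraph.degree_pos_iff_exists_adj (G := T) v0).mpr ⟨z0, hadj0⟩
  have hdeg1 : (T.neighborFinset v0).card = 1 := le_antisymm hv0 hdegpos
  obtain ⟨w0, hw0⟩ := Finset.card_eq_one.mp hdeg1
  refine ⟨v0, Finset.mem_coe.mp v0.2, w0, Finset.mem_coe.mp w0.2, ?_, ?_⟩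
  · have : (w0 : (↑S : Set V)) ∈ T.neighborFinset v0 := by rw [hw0]; exact Finset.mem_singleton_self _
    exact (T.mem_neighborFinset v0 w0).mp this
  · intro x hx hadj
    have hTx : T.Adj v0 ⟨x, Finset.mem_coe.mpr hx⟩ := hadj
    have : (⟨x, Finset.mem_coe.mpr hx⟩ : (↑S : Set V)) ∈ T.neighborFinset v0 :=
      (T.mem_neighborFinset v0 _).mpr hTx
    rw [hw0, Finset.mem_singleton] at this
    exact congrArg Subtype.val this

lemma conn_erase (G : SimpleGraph V) (S : Finset V) (v w : V)
    (hw : w ∈ S) (hwv : w ≠ v)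
    (huniq : ∀ x ∈ S, G.Adj v x → x = w)
    (hconn : (G.induce (↑S : Set V)).Connected) :
    (G.induce (↑(S.erase v) : Set V)).Connected := by
  rw [induce_connected_iff_walks] at hconn ⊢
  refine ⟨⟨w, by simp [hwv, hw]⟩, fun u1 hu1 u2 hu2 => ?_⟩
  have hu1' : u1 ∈ S ∧ u1 ≠ v := by
    have := Finset.mem_coe.mp hu1
    rw [Finset.mem_erase] at this
    exact ⟨this.2, this.1⟩
  have hu2' : u2 ∈ S ∧ u2 ≠ v := by
    have := Finset.mem_coe.mp hu2
    rw [Finset.mem_erase] at this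
    exact ⟨this.2, this.1⟩
  obtain ⟨p0, hp0⟩ := hconn.2 u1 (Finset.mem_coe.mpr hu1'.1) u2 (Finset.mem_coe.mpr hu2'.1)
  have hsupp : ∀ x ∈ (p0.toPath : G.Walk u1 u2).support, x ∈ S :=
    fun x hx => Finset.mem_coe.mp (hp0 x (p0.support_toPath_subset hx))
  have hvnot : v ∉ (p0.toPath : G.Walk u1 u2).support :=
    not_mem_support huniq p0.toPath.2 hsupp hu1'.2 hu2'.2
  refine ⟨p0.toPath, fun x hx => ?_⟩
  have hxv : x ≠ v := fun h => hvnot (h ▸ hx)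
  simp only [Finset.coe_erase, Set.mem_diff, Set.mem_singleton_iff]
  exact ⟨Finset.mem_coe.mpr (hsupp x hx), hxv⟩

lemma aux (G : SimpleGraph V) [DecidableRel G.Adj] (hT : G.IsTree)
    (label : Sym2 V → ℕ)
    (hdeg : ∀ v, G.degree v = 1 ∨ G.degree v = 3 ∨ G.degree v = 4)
    (h3 : ∀ v, G.degree v = 3 → ∀ e ∈ G.incidenceFinset v,
      label e ≤ ∑ e' ∈ (G.incidenceFinset v).erase e, label e')
    (h4 : ∀ v, G.degree v = 4 → ∀ e ∈ G.incidenceFinset v,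
      label e ≤ (∑ e' ∈ (G.incidenceFinset v).erase e, label e') + 1) :
    ∀ n (S : Finset V), S.card ≤ n → S.Nonempty →
      (G.induce (↑S : Set V)).Connected → (∀ v ∈ S, G.degree v ≠ 1) →
      ∀ e ∈ bnd G S,
      label e ≤ (∑ e' ∈ (bnd G S).erase e, label e') +
        (S.filter (fun v => G.degree v = 4)).card := by
  intro n
  induction n with
  | zero =>
    intro S hc hne _ _ _ _
    have := Finset.card_pos.mpr hne
    omega
  | succ n IH =>
    intro S hc hne hconn hInt e he
    have key : ∀ v ∈ S, ∀ f ∈ G.incidenceFinset v,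
        label f ≤ (∑ e' ∈ (G.incidenceFinset v).erase f, label e') +
          (if G.degree v = 4 then 1 else 0) := by
      intro v hv f hf
      rcases hdeg v with h | h | h
      · exact absurd h (hInt v hv)
      · rw [if_neg (by omega)]
        exact (h3 v h f hf).trans (Nat.le_add_right _ _)
      · rw [if_pos h]
        exact h4 v h f hf
    by_cases hS1 : S.card ≤ 1
    · -- singleton case
      have hc1 : S.card = 1 := by
        have := Finset.card_pos.mpr hne; omega
      obtain ⟨v, rfl⟩ := Finset.card_eq_one.mp hc1
      have hbnd : bnd G {v} = G.incidenceFinset v := by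
        ext f
        rw [mem_bnd, mem_inc]
        constructor
        · rintro ⟨a, b, hadj, ha, hb, rfl⟩
          rw [Finset.mem_singleton] at ha
          subst ha
          exact ⟨b, hadj, rfl⟩
        · rintro ⟨c, hadj, rfl⟩
          exact ⟨v, c, hadj, Finset.mem_singleton_self v,
            fun hc' => hadj.ne (Finset.mem_singleton.mp hc').symm, rfl⟩
      have hc4 : (({v} : Finset V).filter (fun x => G.degree x = 4)).card =
          (if G.degree v = 4 then 1 else 0) := by
        rw [Finset.filter_singleton]
        split <;> simp
      rw [hbnd] at he ⊢
      rw [hc4]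
      exact key v (Finset.mem_singleton_self v) e he
    · -- inductive case
      push_neg at hS1
      obtain ⟨v, hvS, w, hwS, hadj, huniq⟩ := exists_leaf G hT.2 S hS1 hconn
      have hwv : w ≠ v := fun h => (G.ne_of_adj hadj) h.symm
      have hS'card : (S.erase v).card ≤ n := by
        rw [Finset.card_erase_of_mem hvS]; omega
      have hS'ne : (S.erase v).Nonempty := ⟨w, Finset.mem_erase.mpr ⟨hwv, hwS⟩⟩
      have hS'conn := conn_erase G S v w hwS hwv huniq hconn
      have hS'Int : ∀ x ∈ S.erase v, G.degree x ≠ 1 :=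
        fun x hx => hInt x (Finset.mem_of_mem_erase hx)
      have hf0 : s(v, w) ∉ bnd G S := by
        rw [mem_bnd]
        rintro ⟨a, b, hab, ha, hb, heq⟩
        rw [Sym2.eq_iff] at heq
        rcases heq with ⟨rfl, rfl⟩ | ⟨rfl, rfl⟩
        · exact hb hwS
        · exact hb hvS
      have hinc : G.incidenceFinset v =
          insert s(v, w) ((bnd G S).filter (fun e' => v ∈ e')) := by
        ext f
        rw [mem_inc, Finset.mem_insert, Finset.mem_filter, mem_bnd]
        constructor
        · rintro ⟨c, hvc, rfl⟩
          by_cases hcw : c = w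
          · left; rw [hcw]
          · right
            have hcS : c ∉ S := fun hcS => hcw (huniq c hcS hvc)
            exact ⟨⟨v, c, hvc, hvS, hcS, rfl⟩, Sym2.mem_mk_left _ _⟩
        · rintro (rfl | ⟨⟨a, b, hab, ha, hb, rfl⟩, hvmem⟩)
          · exact ⟨w, hadj, rfl⟩
          · rcases Sym2.mem_iff.mp hvmem with rfl | rfl
            · exact ⟨b, hab, rfl⟩
            · exact absurd hvS hb
      have hbnd' : bnd G (S.erase v) =
          insert s(v, w) ((bnd G S).filter (fun e' => v ∉ e')) := by
        ext f
        rw [Finset.mem_insert, Finset.mem_filter, mem_bnd, mem_bnd]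
        constructor
        · rintro ⟨a, b, hab, ha, hb, rfl⟩
          have haS : a ∈ S := Finset.mem_of_mem_erase ha
          have hav : a ≠ v := (Finset.mem_erase.mp ha).1
          by_cases hbv : b = v
          · subst hbv
            left
            have haw : a = w := huniq a haS hab.symm
            subst haw
            exact Sym2.eq_swap.symm
          · right
            have hbS : b ∉ S := fun hbS => hb (Finset.mem_erase.mpr ⟨hbv, hbS⟩)
            refine ⟨⟨a, b, hab, haS, hbS, rfl⟩, ?_⟩
            rw [Sym2.mem_iff]
            rintro (rfl | rfl)
            · exact hav rfl
            · exact hbv rfl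
        · rintro (rfl | ⟨⟨a, b, hab, ha, hb, rfl⟩, hvne⟩)
          · exact ⟨w, v, hadj.symm, Finset.mem_erase.mpr ⟨hwv, hwS⟩,
              fun h => (Finset.mem_erase.mp h).1 rfl, Sym2.eq_swap.symm⟩
          · have hav : a ≠ v := fun h => hvne (by rw [h]; exact Sym2.mem_mk_left _ _)
            have hbv : b ≠ v := fun h => hvne (by rw [h]; exact Sym2.mem_mk_right _ _)
            exact ⟨a, b, hab, Finset.mem_erase.mpr ⟨hav, ha⟩,
              fun h => hb (Finset.mem_of_mem_erase h), rfl⟩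
      have hf0in : s(v, w) ∉ (bnd G S).filter (fun e' => v ∈ e') :=
        fun h => hf0 (Finset.mem_filter.mp h).1
      have hf0out : s(v, w) ∉ (bnd G S).filter (fun e' => v ∉ e') :=
        fun h => hf0 (Finset.mem_filter.mp h).1
      have hc4 : (S.filter (fun x => G.degree x = 4)).card =
          ((S.erase v).filter (fun x => G.degree x = 4)).card +
            (if G.degree v = 4 then 1 else 0) := by
        rw [Finset.filter_erase]
        by_cases h4v : G.degree v = 4
        · rw [if_pos h4v]
          have hvmem : v ∈ S.filter (fun x => G.degree x = 4) :=
            Finset.mem_filter.mpr ⟨hvS, h4v⟩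
          rw [Finset.card_erase_of_mem hvmem]
          have := Finset.card_pos.mpr ⟨v, hvmem⟩
          omega
        · rw [if_neg h4v]
          have hnm : v ∉ S.filter (fun x => G.degree x = 4) :=
            fun h => h4v (Finset.mem_filter.mp h).2
          rw [Finset.erase_eq_of_notMem hnm, Nat.add_zero]
      by_cases hve : v ∈ e
      · -- e incident to v
        have heF : e ∈ (bnd G S).filter (fun e' => v ∈ e') :=
          Finset.mem_filter.mpr ⟨he, hve⟩
        have hein : e ∈ G.incidenceFinset v := by
          rw [hinc]; exact Finset.mem_insert_of_mem heF
        have hef0 : e ≠ s(v, w) := fun h => hf0 (h ▸ he)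
        have h1 := key v hvS e hein
        have hrw1 : (G.incidenceFinset v).erase e =
            insert s(v, w) (((bnd G S).filter (fun e' => v ∈ e')).erase e) := by
          rw [hinc, Finset.erase_insert_of_ne (Ne.symm hef0)]
        have hsum1 : ∑ e' ∈ (G.incidenceFinset v).erase e, label e' =
            label s(v, w) +
              ∑ e' ∈ ((bnd G S).filter (fun e' => v ∈ e')).erase e, label e' := by
          rw [hrw1, Finset.sum_insert (fun h => hf0in (Finset.mem_of_mem_erase h))]
        have h2 := IH (S.erase v) hS'card hS'ne hS'conn hS'Int s(v, w)
          (by rw [hbnd']; exact Finset.mem_insert_self _ _)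
        have hrw2 : (bnd G (S.erase v)).erase s(v, w) =
            (bnd G S).filter (fun e' => v ∉ e') := by
          rw [hbnd', Finset.erase_insert hf0out]
        rw [hrw2] at h2
        have hsplit : ∑ e' ∈ (bnd G S).erase e, label e' =
            (∑ e' ∈ ((bnd G S).filter (fun e' => v ∈ e')).erase e, label e') +
              ∑ e' ∈ (bnd G S).filter (fun e' => v ∉ e'), label e' := by
          rw [← Finset.sum_filter_add_sum_filter_not ((bnd G S).erase e)
            (fun e' => v ∈ e')]
          congr 1
          · rw [Finset.filter_erase]
          · have hnm : e ∉ (bnd G S).filter (fun e' => v ∉ e') :=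
              fun h => (Finset.mem_filter.mp h).2 hve
            rw [Finset.filter_erase, Finset.erase_eq_of_notMem hnm]
        rw [hsum1] at h1
        rw [hc4, hsplit]
        omega
      · -- e not incident to v
        have heF : e ∈ (bnd G S).filter (fun e' => v ∉ e') :=
          Finset.mem_filter.mpr ⟨he, hve⟩
        have hef0 : e ≠ s(v, w) := fun h => hf0 (h ▸ he)
        have he' : e ∈ bnd G (S.erase v) := by
          rw [hbnd']; exact Finset.mem_insert_of_mem heF
        have h2 := IH (S.erase v) hS'card hS'ne hS'conn hS'Int e he'
        have hrw2 : (bnd G (S.erase v)).erase e =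
            insert s(v, w) (((bnd G S).filter (fun e' => v ∉ e')).erase e) := by
          rw [hbnd', Finset.erase_insert_of_ne (Ne.symm hef0)]
        have hsum2 : ∑ e' ∈ (bnd G (S.erase v)).erase e, label e' =
            label s(v, w) +
              ∑ e' ∈ ((bnd G S).filter (fun e' => v ∉ e')).erase e, label e' := by
          rw [hrw2, Finset.sum_insert (fun h => hf0out (Finset.mem_of_mem_erase h))]
        have hf0inc : s(v, w) ∈ G.incidenceFinset v := by
          rw [hinc]; exact Finset.mem_insert_self _ _
        have h1 := key v hvS s(v, w) hf0inc
        have hrw1 : (G.incidenceFinset v).erase s(v, w) =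
            (bnd G S).filter (fun e' => v ∈ e') := by
          rw [hinc, Finset.erase_insert hf0in]
        rw [hrw1] at h1
        have hsplit : ∑ e' ∈ (bnd G S).erase e, label e' =
            (∑ e' ∈ (bnd G S).filter (fun e' => v ∈ e'), label e') +
              ∑ e' ∈ ((bnd G S).filter (fun e' => v ∉ e')).erase e, label e' := by
          rw [← Finset.sum_filter_add_sum_filter_not ((bnd G S).erase e)
            (fun e' => v ∈ e')]
          congr 1
          · have hnm : e ∉ (bnd G S).filter (fun e' => v ∈ e') :=
              fun h => hve (Finset.mem_filter.mp h).2
            rw [Finset.filter_erase, Finset.erase_eq_of_notMem hnm]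
          · rw [Finset.filter_erase]
        rw [hsum2] at h2
        rw [hc4, hsplit]
        omega


end Stmt0Aux

/-- In a finite tree with edge labels, where every internal
vertex has degree 3 or 4, degree-3 vertices satisfy that each incident
label is at most the sum of the other two incident labels, and degree-4
vertices satisfy that each incident label is at most the sum of the other
three plus one, every boundary edge label of a connected subtree `S` of
internal vertices is bounded by the sum of the other boundary labels plus
the number of degree-4 vertices in `S`. -/
theorem stmt0 {V : Type*} [Fintype V] [DecidableEq V]
    (G : SimpleGraph V) [DecidableRel G.Adj] (hT : G.IsTree)
    (label : Sym2 V → ℕ)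
    (hdeg : ∀ v, G.degree v = 1 ∨ G.degree v = 3 ∨ G.degree v = 4)
    (h3 : ∀ v, G.degree v = 3 → ∀ e ∈ G.incidenceFinset v,
      label e ≤ ∑ e' ∈ (G.incidenceFinset v).erase e, label e')
    (h4 : ∀ v, G.degree v = 4 → ∀ e ∈ G.incidenceFinset v,
      label e ≤ (∑ e' ∈ (G.incidenceFinset v).erase e, label e') + 1)
    (S : Finset V) (hS : S.Nonempty)
    (hconn : (G.induce (↑S : Set V)).Connected)
    (hInt : ∀ v ∈ S, G.degree v ≠ 1)
    (B : Finset (Sym2 V))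
    (hB : B = G.edgeFinset.filter (fun e => ∃ a b, e = s(a, b) ∧ a ∈ S ∧ b ∉ S))
    (e : Sym2 V) (he : e ∈ B) :
    label e ≤ (∑ e' ∈ B.erase e, label e') +
      (S.filter (fun v => G.degree v = 4)).card := by
  subst hB
  exact Stmt0Aux.aux G hT label hdeg h3 h4 S.card S le_rfl hS hconn hInt e he
end

section
/- Combining the two previous facts: in a planar tree with n cyclically ordered leaves, all internal vertices of degree 3 or 4, and natural-number edge labels satisfying the vertex conditions (degree-3: max label ≤ sum of other two; degree-4: max label ≤ sum of other three plus 1), every internal edge whose cut separates d consecutive leaves from the rest, with all leaf edges labeled 0, carries a label at most ⌊(d-1)/2⌋. -/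
open scoped Classical

namespace Stmt4Helper

open SimpleGraph Finset

variable {V : Type*}

/-- The set of vertices on the `u`-side of the edge `s(u,v)`. -/
def side (G : SimpleGraph V) (u v : V) : Set V :=
  {x | (G.deleteEdges {s(u, v)}).Reachable u x}

lemma mem_side_self (G : SimpleGraph V) (u v : V) : u ∈ side G u v :=
  Reachable.refl u

lemma not_reach (G : SimpleGraph V) (hT : G.IsAcyclic) {u v : V} (huv : G.Adj u v) :
    ¬ (G.deleteEdges {s(u, v)}).Reachable u v := by
  have hb : G.IsBridge s(u, v) := (isAcyclic_iff_forall_adj_isBridge.mp hT) huv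
  exact isBridge_iff.mp hb

lemma not_mem_side (G : SimpleGraph V) (hT : G.IsAcyclic) {u w : V} (huw : G.Adj u w) :
    u ∉ side G w u :=
  fun h => not_reach G hT huw.symm h

/-- From reachability on the `w`-side extract a path in `G` avoiding `u`. -/
lemma pathAvoid (G : SimpleGraph V) (hT : G.IsAcyclic) {u w x : V} (huw : G.Adj u w)
    (hx : x ∈ side G w u) :
    ∃ p : G.Walk w x, p.IsPath ∧ u ∉ p.support := by
  obtain ⟨p0⟩ := hx
  obtain ⟨q, hq⟩ : ∃ q : (G.deleteEdges {s(w, u)}).Walk w x, q.IsPath :=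
    ⟨p0.toPath, p0.toPath.2⟩
  have hu : u ∉ q.support := by
    intro h
    exact not_reach G hT huw.symm ⟨q.takeUntil u h⟩
  have hsub : ∀ e ∈ q.edges, e ∈ G.edgeSet := by
    intro e he
    have := q.edges_subset_edgeSet he
    rw [edgeSet_deleteEdges] at this
    exact this.1
  exact ⟨q.transfer G hsub, hq.transfer hsub, by rwa [Walk.support_transfer]⟩

/-- A walk in `G` avoiding `u` survives deleting any edge at `u`. -/
lemma reachDel (G : SimpleGraph V) {u w x : V} (p : G.Walk w x) (hu : u ∉ p.support) (c : V) :
    (G.deleteEdges {s(u, c)}).Reachable w x := by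
  refine ⟨p.toDeleteEdges _ (fun e he hmem => hu ?_)⟩
  rw [Set.mem_singleton_iff] at hmem
  subst hmem
  exact p.fst_mem_support_of_mem_edges he

lemma sideSubset (G : SimpleGraph V) (hT : G.IsAcyclic) {u v w : V} (huv : G.Adj u v)
    (huw : G.Adj u w) (hwv : w ≠ v) : side G w u ⊆ side G u v := by
  intro x hx
  obtain ⟨p, _, hu⟩ := pathAvoid G hT huw hx
  have h1 : (G.deleteEdges {s(u, v)}).Reachable w x := reachDel G p hu v
  have h2 : (G.deleteEdges {s(u, v)}).Adj u w := by
    rw [deleteEdges_adj]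
    refine ⟨huw, ?_⟩
    rw [Set.mem_singleton_iff, Sym2.congr_right]
    exact hwv
  exact h2.reachable.trans h1

lemma sideCover (G : SimpleGraph V) (hT : G.IsAcyclic) {u v x : V} (huv : G.Adj u v)
    (hx : x ∈ side G u v) (hxu : x ≠ u) :
    ∃ w, G.Adj u w ∧ w ≠ v ∧ x ∈ side G w u := by
  obtain ⟨p0⟩ := hx
  obtain ⟨p, hp⟩ : ∃ p : (G.deleteEdges {s(u, v)}).Walk u x, p.IsPath :=
    ⟨p0.toPath, p0.toPath.2⟩
  cases p with
  | nil => exact absurd rfl hxu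
  | @cons _ w _ h q =>
    rw [Walk.cons_isPath_iff] at hp
    obtain ⟨hq, huq⟩ := hp
    rw [deleteEdges_adj] at h
    have hwv : w ≠ v := by
      intro hh
      exact h.2 (by rw [hh]; rfl)
    have hsub : ∀ e ∈ q.edges, e ∈ G.edgeSet := by
      intro e he
      have := q.edges_subset_edgeSet he
      rw [edgeSet_deleteEdges] at this
      exact this.1
    have hu' : u ∉ (q.transfer G hsub).support := by rwa [Walk.support_transfer]
    refine ⟨w, h.1, hwv, ?_⟩
    have hr := reachDel G (q.transfer G hsub) hu' w
    show (G.deleteEdges {s(w, u)}).Reachable w x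
    rwa [Sym2.eq_swap]

lemma sideDisjoint (G : SimpleGraph V) (hT : G.IsAcyclic) {u w w' x : V} (huw : G.Adj u w)
    (huw' : G.Adj u w') (hne : w ≠ w')
    (hx : x ∈ side G w u) (hx' : x ∈ side G w' u) : False := by
  obtain ⟨p, hp, hu⟩ := pathAvoid G hT huw hx
  obtain ⟨p', hp', hu'⟩ := pathAvoid G hT huw' hx'
  have hval : Walk.cons huw p = Walk.cons huw' p' :=
    congrArg Subtype.val
      (hT.path_unique ⟨Walk.cons huw p, (Walk.cons_isPath_iff _ _).mpr ⟨hp, hu⟩⟩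
        ⟨Walk.cons huw' p', (Walk.cons_isPath_iff _ _).mpr ⟨hp', hu'⟩⟩)
  have hsup : (Walk.cons huw p).support = (Walk.cons huw' p').support :=
    congrArg Walk.support hval
  rw [Walk.support_cons, Walk.support_cons] at hsup
  have h2 : p.support = p'.support := by
    injection hsup
  have e1 := p.support_eq_cons
  have e2 := p'.support_eq_cons
  rw [e1, e2] at h2
  injection h2 with h3 _
  exact hne h3

variable [Fintype V] [DecidableEq V]

/-- Main induction: for any oriented edge `(u,v)`, the number `d` of leaves on the
`u`-side is at least 1 and `label s(u,v) ≤ (d-1)/2`. -/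
theorem aux (G : SimpleGraph V) [DecidableRel G.Adj] (hT : G.IsTree)
    (label : Sym2 V → ℕ) (n : ℕ) (leaf : Fin n → V)
    (hleaf : ∀ v, G.degree v = 1 ↔ ∃ k, leaf k = v)
    (hdeg : ∀ v, G.degree v = 1 ∨ G.degree v = 3 ∨ G.degree v = 4)
    (h3 : ∀ v, G.degree v = 3 → ∀ e ∈ G.incidenceFinset v,
      label e ≤ ∑ e' ∈ (G.incidenceFinset v).erase e, label e')
    (h4 : ∀ v, G.degree v = 4 → ∀ e ∈ G.incidenceFinset v,
      label e ≤ (∑ e' ∈ (G.incidenceFinset v).erase e, label e') + 1)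
    (hleaf0 : ∀ e ∈ G.edgeFinset, (∃ k, leaf k ∈ e) → label e = 0) :
    ∀ N : ℕ, ∀ u v : V, G.Adj u v →
      (Finset.univ.filter (· ∈ side G u v)).card ≤ N →
      1 ≤ (Finset.univ.filter (fun k => leaf k ∈ side G u v)).card ∧
      label s(u, v) ≤
        ((Finset.univ.filter (fun k => leaf k ∈ side G u v)).card - 1) / 2 := by
  intro N
  induction N with
  | zero =>
    intro u v huv hc
    exfalso
    have hu : u ∈ Finset.univ.filter (· ∈ side G u v) := by
      simp [mem_side_self]
    have := Finset.card_pos.mpr ⟨u, hu⟩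
    omega
  | succ N ih =>
    intro u v huv hc
    by_cases h1 : G.degree u = 1
    · obtain ⟨k, hk⟩ := (hleaf u).mp h1
      constructor
      · have hmem : k ∈ Finset.univ.filter (fun k => leaf k ∈ side G u v) := by
          simp [hk, mem_side_self]
        exact Finset.card_pos.mpr ⟨k, hmem⟩
      · have : label s(u, v) = 0 := by
          apply hleaf0
          · rw [mem_edgeFinset]
            exact huv
          · exact ⟨k, by rw [hk]; exact Sym2.mem_mk_left u v⟩
        omega
    · have hAcy : G.IsAcyclic := hT.IsAcyclic
      set s : Finset V := (G.neighborFinset u).erase v with hs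
      have hvmem : v ∈ G.neighborFinset u := (G.mem_neighborFinset _ _).mpr huv
      have hsadj : ∀ w ∈ s, w ≠ v ∧ G.Adj u w := by
        intro w hw
        rw [hs, Finset.mem_erase, mem_neighborFinset] at hw
        exact hw
      -- partition of the leaf set
      have hpart : (Finset.univ.filter (fun k => leaf k ∈ side G u v)) =
          s.biUnion (fun w => Finset.univ.filter (fun k => leaf k ∈ side G w u)) := by
        ext k
        simp only [Finset.mem_filter, Finset.mem_biUnion, Finset.mem_univ, true_and]
        constructor
        · intro hkk
          have hku : leaf k ≠ u := fun he => h1 ((hleaf u).mpr ⟨k, he⟩)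
          obtain ⟨w, hw1, hw2, hw3⟩ := sideCover G hAcy huv hkk hku
          refine ⟨w, ?_, hw3⟩
          rw [hs, Finset.mem_erase, mem_neighborFinset]
          exact ⟨hw2, hw1⟩
        · rintro ⟨w, hw, hkk⟩
          obtain ⟨hwv, hadj⟩ := hsadj w hw
          exact sideSubset G hAcy huv hadj hwv hkk
      have hdisj : ∀ w ∈ s, ∀ w' ∈ s, w ≠ w' →
          Disjoint (Finset.univ.filter (fun k => leaf k ∈ side G w u))
            (Finset.univ.filter (fun k => leaf k ∈ side G w' u)) := by
        intro w hw w' hw' hne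
        rw [Finset.disjoint_left]
        intro k hk hk'
        simp only [Finset.mem_filter, Finset.mem_univ, true_and] at hk hk'
        exact sideDisjoint G hAcy (hsadj w hw).2 (hsadj w' hw').2 hne hk hk'
      have hcard : (Finset.univ.filter (fun k => leaf k ∈ side G u v)).card =
          ∑ w ∈ s, (Finset.univ.filter (fun k => leaf k ∈ side G w u)).card := by
        rw [hpart, Finset.card_biUnion hdisj]
      -- induction hypothesis applied to each child
      have hih : ∀ w ∈ s,
          1 ≤ (Finset.univ.filter (fun k => leaf k ∈ side G w u)).card ∧
          label s(u, w) ≤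
            ((Finset.univ.filter (fun k => leaf k ∈ side G w u)).card - 1) / 2 := by
        intro w hw
        obtain ⟨hwv, hadj⟩ := hsadj w hw
        have hsub : (Finset.univ.filter (· ∈ side G w u)) ⊆
            (Finset.univ.filter (· ∈ side G u v)) := by
          intro x hx
          simp only [Finset.mem_filter, Finset.mem_univ, true_and] at hx ⊢
          exact sideSubset G hAcy huv hadj hwv hx
        have humem : u ∈ Finset.univ.filter (· ∈ side G u v) := by
          simp [mem_side_self]
        have hunot : u ∉ Finset.univ.filter (· ∈ side G w u) := by
          simp only [Finset.mem_filter, Finset.mem_univ, true_and]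
          exact not_mem_side G hAcy hadj
        have hlt : (Finset.univ.filter (· ∈ side G w u)).card <
            (Finset.univ.filter (· ∈ side G u v)).card :=
          Finset.card_lt_card ((Finset.ssubset_iff_of_subset hsub).mpr ⟨u, humem, hunot⟩)
        have hres := ih w u hadj.symm (by omega)
        rwa [Sym2.eq_swap] at hres
      -- the incidence sum as a sum over neighbors
      have hinj : Function.Injective (fun w : V => s(u, w)) := by
        intro a b hab
        exact Sym2.congr_right.mp hab
      have himg : G.incidenceFinset u = (G.neighborFinset u).image (fun w => s(u, w)) := by
        ext e
        induction e with
        | _ a b =>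
          rw [mem_incidenceFinset, Finset.mem_image]
          constructor
          · intro he
            rw [mk'_mem_incidenceSet_iff] at he
            obtain ⟨hadj, hab⟩ := he
            rcases hab with rfl | rfl
            · exact ⟨b, (G.mem_neighborFinset _ _).mpr hadj, rfl⟩
            · exact ⟨a, (G.mem_neighborFinset _ _).mpr hadj.symm, Sym2.eq_swap⟩
          · rintro ⟨w, hw, heq⟩
            rw [← heq, mk'_mem_incidenceSet_iff]
            exact ⟨(G.mem_neighborFinset _ _).mp hw, Or.inl rfl⟩
      have herase : (G.incidenceFinset u).erase s(u, v) = s.image (fun w => s(u, w)) := by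
        rw [himg, hs, Finset.image_erase hinj]
      have hsum : ∑ e' ∈ (G.incidenceFinset u).erase s(u, v), label e' =
          ∑ w ∈ s, label s(u, w) := by
        rw [herase, Finset.sum_image (fun a _ b _ h => hinj h)]
      have hincmem : s(u, v) ∈ G.incidenceFinset u := by
        rw [mem_incidenceFinset, mk'_mem_incidenceSet_iff]
        exact ⟨huv, Or.inl rfl⟩
      -- arithmetic
      set D := (Finset.univ.filter (fun k => leaf k ∈ side G u v)).card with hD
      have hpt : ∀ w ∈ s, 2 * label s(u, w) + 1 ≤
          (Finset.univ.filter (fun k => leaf k ∈ side G w u)).card := by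
        intro w hw
        obtain ⟨hw1, hw2⟩ := hih w hw
        omega
      have hsumpt : ∑ w ∈ s, (2 * label s(u, w) + 1) ≤ D := by
        rw [hcard]
        exact Finset.sum_le_sum hpt
      rw [Finset.sum_add_distrib, Finset.sum_const, ← Finset.mul_sum, smul_eq_mul, mul_one]
        at hsumpt
      have hcards : s.card = G.degree u - 1 := by
        rw [hs, Finset.card_erase_of_mem hvmem, card_neighborFinset_eq_degree]
      set L := ∑ w ∈ s, label s(u, w) with hL
      rcases hdeg u with h | h | h
      · exact absurd h h1
      · have hlab := h3 u h s(u, v) hincmem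
        rw [hsum] at hlab
        rw [h] at hcards
        omega
      · have hlab := h4 u h s(u, v) hincmem
        rw [hsum] at hlab
        rw [h] at hcards
        omega

end Stmt4Helper

/-- In a planar tree with `n` cyclically ordered leaves, internal
vertices of degree 3 or 4, edge labels satisfying the degree-3 and degree-4
vertex conditions, and all leaf edges labeled 0, an internal edge whose cut
separates the arc of `d = j - i` consecutive leaves `i, …, j-1` from the rest
carries a label at most `⌊(d-1)/2⌋`. -/
theorem stmt4 {V : Type*} [Fintype V] [DecidableEq V]
    (G : SimpleGraph V) [DecidableRel G.Adj] (hT : G.IsTree)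
    (label : Sym2 V → ℕ)
    (n : ℕ) (hn : 3 ≤ n)
    (leaf : Fin n → V) (hinj : Function.Injective leaf)
    (hleaf : ∀ v, G.degree v = 1 ↔ ∃ k, leaf k = v)
    (hdeg : ∀ v, G.degree v = 1 ∨ G.degree v = 3 ∨ G.degree v = 4)
    (h3 : ∀ v, G.degree v = 3 → ∀ e ∈ G.incidenceFinset v,
      label e ≤ ∑ e' ∈ (G.incidenceFinset v).erase e, label e')
    (h4 : ∀ v, G.degree v = 4 → ∀ e ∈ G.incidenceFinset v,
      label e ≤ (∑ e' ∈ (G.incidenceFinset v).erase e, label e') + 1)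
    (hleaf0 : ∀ e ∈ G.edgeFinset, (∃ k, leaf k ∈ e) → label e = 0)
    (u v : V) (huv : G.Adj u v)
    (hu : G.degree u ≠ 1) (hv : G.degree v ≠ 1)
    (A : Set V) (hA : A = {w | (G.deleteEdges {s(u, v)}).Reachable u w})
    (i j : ℕ) (hij : i < j) (hj : j ≤ n)
    (hd2 : 2 ≤ j - i) (hdn : j - i ≤ n - 2)
    (harc : ∀ k : Fin n, leaf k ∈ A ↔ i ≤ (k : ℕ) ∧ (k : ℕ) < j) :
    label s(u, v) ≤ (j - i - 1) / 2 := by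
  subst hA
  have key := Stmt4Helper.aux G hT label n leaf hleaf hdeg h3 h4 hleaf0
    (Finset.univ.filter (· ∈ Stmt4Helper.side G u v)).card u v huv le_rfl
  have hset : (Finset.univ.filter (fun k : Fin n => leaf k ∈ Stmt4Helper.side G u v)) =
      Finset.univ.filter (fun k : Fin n => i ≤ (k : ℕ) ∧ (k : ℕ) < j) := by
    ext k
    simp only [Finset.mem_filter, Finset.mem_univ, true_and]
    exact harc k
  rw [hset] at key
  have hcount : (Finset.univ.filter (fun k : Fin n => i ≤ (k : ℕ) ∧ (k : ℕ) < j)).card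
      = j - i := by
    rw [← Nat.card_Ico i j]
    apply Finset.card_bij (fun (k : Fin n) _ => (k : ℕ))
    · intro a ha
      simp only [Finset.mem_filter, Finset.mem_univ, true_and] at ha
      rw [Finset.mem_Ico]
      exact ha
    · intro a _ b _ hab
      exact Fin.val_injective hab
    · intro m hm
      rw [Finset.mem_Ico] at hm
      refine ⟨⟨m, lt_of_lt_of_le hm.2 hj⟩, ?_, rfl⟩
      simp only [Finset.mem_filter, Finset.mem_univ, true_and]
      exact hm
  rw [hcount] at key
  exact key.2
end
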